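/- Let 𝔤 = V_1 ⊕ ... ⊕ V_ι be a stratified Lie algebra with graded basis X_1,...,X_q and dual left-invariant 1-forms η_1,...,η_q, and fix κ ∈ {1,...,ι-1} and an index s with d_s = κ+1. Writing X_s = Σ_{d_k=1, d_l=κ, k<l} γ_{k,l}^s [X_k, X_l] (possible since V_{κ+1} = [V_1, V_κ]), define the (m_κ - 2)-form θ_s = Σ (-1)^{h(m_κ,k,l)} γ_{k,l}^s η_1 ∧ ... ∧ \hat{η}_k ∧ ... ∧ \hat{η}_l ∧ ... ∧ η_{m_κ}, with signs chosen so that (-1)^{h} (∧_{i≠k,l} η_i) ∧ η_l ∧ η_k = η_1 ∧ ... ∧ η_{m_κ}. Then for every r with d_r > κ: θ_s ∧ dη_r ∧ η_{m_κ+1} ∧ ... ∧ η_{m_{d_r - 1}} = δ_{r,s} · η_1 ∧ ... ∧ η_{m_{d_r - 1}}. -/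

import Mathlib

set_option synthInstance.maxHeartbeats 1000000
set_option maxHeartbeats 1000000
open scoped Classical

/-- The span of all brackets `⁅x, y⁆` with `x ∈ A`, `y ∈ B`. -/
def bracketSpan {𝔤 : Type*} [LieRing 𝔤] [LieAlgebra ℝ 𝔤]
    (A B : Submodule ℝ 𝔤) : Submodule ℝ 𝔤 :=
  Submodule.span ℝ {z | ∃ x ∈ A, ∃ y ∈ B, z = ⁅x, y⁆}

/-- The wedge `η_{l_1} ∧ … ∧ η_{l_t}` of dual-basis 1-forms, as an element of the
exterior algebra of the dual space. -/
noncomputable def etaProd {𝔤 : Type*} [LieRing 𝔤] [LieAlgebra ℝ 𝔤] {q : ℕ}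
    (b : Module.Basis (Fin q) ℝ 𝔤) (l : List (Fin q)) :
    ExteriorAlgebra ℝ (Module.Dual ℝ 𝔤) :=
  (l.map fun i => ExteriorAlgebra.ι ℝ (b.coord i)).prod

/-- The Maurer–Cartan differential `dη_r = Σ_{j<i} c_{j,i}^r η_i ∧ η_j`, with
`c_{j,i}^r = η_r(⁅X_j, X_i⁆)`, as an element of the exterior algebra of the dual. -/
noncomputable def dEta {𝔤 : Type*} [LieRing 𝔤] [LieAlgebra ℝ 𝔤] {q : ℕ}
    (b : Module.Basis (Fin q) ℝ 𝔤) (r : Fin q) :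
    ExteriorAlgebra ℝ (Module.Dual ℝ 𝔤) :=
  ∑ p ∈ (Finset.univ ×ˢ Finset.univ).filter (fun p : Fin q × Fin q => p.1 < p.2),
    (b.repr ⁅b p.1, b p.2⁆ r) •
      (ExteriorAlgebra.ι ℝ (b.coord p.2) * ExteriorAlgebra.ι ℝ (b.coord p.1))

section Aux
variable {𝔤 : Type*} [LieRing 𝔤] [LieAlgebra ℝ 𝔤] {q : ℕ} (b : Module.Basis (Fin q) ℝ 𝔤)

lemma etaProd_nil : etaProd b [] = 1 := rfl

lemma etaProd_cons (v : Fin q) (L : List (Fin q)) :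
    etaProd b (v :: L) = ExteriorAlgebra.ι ℝ (b.coord v) * etaProd b L := by
  simp [etaProd]

lemma etaProd_append (L1 L2 : List (Fin q)) :
    etaProd b (L1 ++ L2) = etaProd b L1 * etaProd b L2 := by
  simp [etaProd]

lemma ι_etaProd_ι (x : Module.Dual ℝ 𝔤) :
    ∀ L : List (Fin q), ExteriorAlgebra.ι ℝ x * etaProd b L * ExteriorAlgebra.ι ℝ x = 0 := by
  intro L
  induction L with
  | nil => simp [etaProd_nil, ExteriorAlgebra.ι_sq_zero]
  | cons a t ih =>
    rw [etaProd_cons]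
    have hsw : ExteriorAlgebra.ι ℝ x * ExteriorAlgebra.ι ℝ (b.coord a)
        = - (ExteriorAlgebra.ι ℝ (b.coord a) * ExteriorAlgebra.ι ℝ x) := by
      have := ExteriorAlgebra.ι_add_mul_swap (R := ℝ) x (b.coord a)
      linear_combination (norm := noncomm_ring) this
    calc ExteriorAlgebra.ι ℝ x * (ExteriorAlgebra.ι ℝ (b.coord a) * etaProd b t) *
          ExteriorAlgebra.ι ℝ x
        = (ExteriorAlgebra.ι ℝ x * ExteriorAlgebra.ι ℝ (b.coord a)) *
            (etaProd b t * ExteriorAlgebra.ι ℝ x) := by noncomm_ring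
      _ = - (ExteriorAlgebra.ι ℝ (b.coord a) *
            (ExteriorAlgebra.ι ℝ x * etaProd b t * ExteriorAlgebra.ι ℝ x)) := by
            rw [hsw]; noncomm_ring
      _ = 0 := by rw [ih]; simp

lemma etaProd_mul_ι_of_mem {v : Fin q} : ∀ {L : List (Fin q)}, v ∈ L →
    etaProd b L * ExteriorAlgebra.ι ℝ (b.coord v) = 0 := by
  intro L
  induction L with
  | nil => simp
  | cons a t ih =>
    intro hv
    rw [etaProd_cons]
    rcases eq_or_ne v a with rfl | hne
    · rw [mul_assoc, ← mul_assoc]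
      exact ι_etaProd_ι b _ t
    · have hvt : v ∈ t := by
        rcases List.mem_cons.mp hv with h | h
        · exact absurd h hne
        · exact h
      rw [mul_assoc, ih hvt, mul_zero]

lemma etaProd_dup {v : Fin q} {L1 L2 : List (Fin q)} (h1 : v ∈ L1) (h2 : v ∈ L2) :
    etaProd b (L1 ++ L2) = 0 := by
  obtain ⟨T1, T2, rfl⟩ := List.append_of_mem h2
  have : L1 ++ (T1 ++ v :: T2) = ((L1 ++ T1) ++ [v]) ++ T2 := by simp
  rw [this, etaProd_append, etaProd_append]
  have h0 : etaProd b (L1 ++ T1) * ExteriorAlgebra.ι ℝ (b.coord v) = 0 :=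
    etaProd_mul_ι_of_mem b (by simp [h1])
  have h3 : etaProd b [v] = ExteriorAlgebra.ι ℝ (b.coord v) := by simp [etaProd]
  rw [h3, h0, zero_mul]

lemma etaProd_mul_pair_mul (E T : List (Fin q)) (x y : Fin q) :
    etaProd b E * (ExteriorAlgebra.ι ℝ (b.coord x) * ExteriorAlgebra.ι ℝ (b.coord y)) *
      etaProd b T = etaProd b (E ++ x :: y :: T) := by
  simp [etaProd, mul_assoc]

lemma etaProd_pair_dup (E T : List (Fin q)) (x y v : Fin q) (hv : v = x ∨ v = y)
    (hmem : v ∈ E ∨ v ∈ T) : etaProd b (E ++ x :: y :: T) = 0 := by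
  rcases hmem with hE | hT
  · exact etaProd_dup b hE (by rcases hv with rfl | rfl <;> simp)
  · have hre : E ++ x :: y :: T = (E ++ [x, y]) ++ T := by simp
    rw [hre]
    exact etaProd_dup b (by rcases hv with rfl | rfl <;> simp) hT

lemma filter_split {q : ℕ} (a c : ℕ) (hac : a ≤ c) :
    ∀ (l : List (Fin q)), l.Pairwise (· ≤ ·) →
      l.filter (fun i : Fin q => decide ((i : ℕ) < c)) =
        l.filter (fun i : Fin q => decide ((i : ℕ) < a)) ++
          l.filter (fun i : Fin q => decide (a ≤ (i : ℕ) ∧ (i : ℕ) < c)) := by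
  intro l
  induction l with
  | nil => simp
  | cons x t ih =>
    intro hp
    have hp' := (List.pairwise_cons.mp hp)
    have iht := ih hp'.2
    by_cases hxa : (x : ℕ) < a
    · have hxc : (x : ℕ) < c := lt_of_lt_of_le hxa hac
      have hmid : ¬ (a ≤ (x:ℕ) ∧ (x:ℕ) < c) := by omega
      rw [List.filter_cons, List.filter_cons, List.filter_cons,
        if_pos (by simpa using hxc), if_pos (by simpa using hxa),
        if_neg (by simpa using hmid), iht]
      simp
    · by_cases hxc : (x : ℕ) < c
      · have hmid : a ≤ (x:ℕ) ∧ (x:ℕ) < c := ⟨le_of_not_gt hxa, hxc⟩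
        rw [List.filter_cons, List.filter_cons, List.filter_cons,
          if_pos (by simpa using hxc), if_neg (by simpa using hxa),
          if_pos (by simpa using hmid)]
        have hnil : t.filter (fun i : Fin q => decide ((i : ℕ) < a)) = [] := by
          apply List.filter_eq_nil_iff.mpr
          intro y hy
          have : x ≤ y := hp'.1 y hy
          simp only [decide_eq_true_eq]
          omega
        rw [iht, hnil]
        simp
      · have hmid : ¬ (a ≤ (x:ℕ) ∧ (x:ℕ) < c) := by omega
        rw [List.filter_cons, List.filter_cons, List.filter_cons,
          if_neg (by simpa using hxc), if_neg (by simpa using hxa),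
          if_neg (by simpa using hmid)]
        exact iht

end Aux

section Lie
variable {𝔤 : Type*} [LieRing 𝔤] [LieAlgebra ℝ 𝔤]

lemma mem_bracketSpan {A B : Submodule ℝ 𝔤} {x y : 𝔤} (hx : x ∈ A) (hy : y ∈ B) :
    ⁅x, y⁆ ∈ bracketSpan A B :=
  Submodule.subset_span ⟨x, hx, y, hy, rfl⟩

noncomputable def Wdeg {ι : ℕ} (V : Fin ι → Submodule ℝ 𝔤) (n : ℕ) : Submodule ℝ 𝔤 :=
  if h : n < ι then V ⟨n, h⟩ else ⊥

lemma Wdeg_eq {ι : ℕ} (V : Fin ι → Submodule ℝ 𝔤) {n : ℕ} (h : n < ι) :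
    Wdeg V n = V ⟨n, h⟩ := dif_pos h

lemma Wdeg_bot {ι : ℕ} (V : Fin ι → Submodule ℝ 𝔤) {n : ℕ} (h : ¬ n < ι) :
    Wdeg V n = ⊥ := dif_neg h

lemma strat' {ι : ℕ} (hι : 2 ≤ ι) (V : Fin ι → Submodule ℝ 𝔤)
    (hstrat : ∀ j : Fin ι, ∀ h : (j : ℕ) + 1 < ι,
      bracketSpan (V ⟨0, by omega⟩) (V j) = V ⟨(j : ℕ) + 1, h⟩)
    (hlast : bracketSpan (V ⟨0, by omega⟩) (V ⟨ι - 1, by omega⟩) = ⊥) :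
    ∀ (c : ℕ) (hc : c < ι),
      bracketSpan (V ⟨0, by omega⟩) (V ⟨c, hc⟩) = Wdeg V (c + 1) := by
  intro c hc
  by_cases h : c + 1 < ι
  · rw [Wdeg_eq V h]
    have := hstrat ⟨c, hc⟩ (by simpa using h)
    simpa using this
  · rw [Wdeg_bot V h]
    have hc' : c = ι - 1 := by omega
    subst hc'
    exact hlast

lemma graded_bracket {ι : ℕ} (hι : 2 ≤ ι) (V : Fin ι → Submodule ℝ 𝔤)
    (hstrat : ∀ j : Fin ι, ∀ h : (j : ℕ) + 1 < ι,
      bracketSpan (V ⟨0, by omega⟩) (V j) = V ⟨(j : ℕ) + 1, h⟩)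
    (hlast : bracketSpan (V ⟨0, by omega⟩) (V ⟨ι - 1, by omega⟩) = ⊥) :
    ∀ (a c : ℕ) (x y : 𝔤), x ∈ Wdeg V a → y ∈ Wdeg V c →
      ⁅x, y⁆ ∈ Wdeg V (a + c + 1) := by
  have base : ∀ (c : ℕ) (x y : 𝔤), x ∈ Wdeg V 0 → y ∈ Wdeg V c →
      ⁅x, y⁆ ∈ Wdeg V (0 + c + 1) := by
    intro c x y hx hy
    by_cases hc : c < ι
    · rw [Wdeg_eq V hc] at hy
      rw [Wdeg_eq V (by omega : (0:ℕ) < ι)] at hx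
      have hmem : ⁅x, y⁆ ∈ bracketSpan (V ⟨0, by omega⟩) (V ⟨c, hc⟩) := mem_bracketSpan hx hy
      rw [strat' hι V hstrat hlast c hc] at hmem
      have he : 0 + c + 1 = c + 1 := by omega
      rw [he]
      exact hmem
    · rw [Wdeg_bot V hc] at hy
      have : y = 0 := by simpa using hy
      rw [this, lie_zero]
      exact Submodule.zero_mem _
  intro a
  induction a with
  | zero => exact base
  | succ a' ih =>
    intro c x y hx hy
    by_cases ha : a' + 1 < ι
    · rw [Wdeg_eq V ha] at hx
      have ha' : a' < ι := by omega
      have hVa : V ⟨a' + 1, ha⟩ = bracketSpan (V ⟨0, by omega⟩) (V ⟨a', ha'⟩) := by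
        rw [strat' hι V hstrat hlast a' ha', Wdeg_eq V ha]
      rw [hVa] at hx
      unfold bracketSpan at hx
      induction hx using Submodule.span_induction with
      | mem z hz =>
        obtain ⟨u, hu, w, hw, rfl⟩ := hz
        rw [lie_lie]
        apply sub_mem
        · have h1 : ⁅w, y⁆ ∈ Wdeg V (a' + c + 1) :=
            ih c w y (by rw [Wdeg_eq V ha']; exact hw) hy
          have h2 := base (a' + c + 1) u _
            (by rw [Wdeg_eq V (by omega : (0:ℕ) < ι)]; exact hu) h1
          have he : 0 + (a' + c + 1) + 1 = a' + 1 + c + 1 := by omega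
          rw [he] at h2
          exact h2
        · have h1 : ⁅u, y⁆ ∈ Wdeg V (0 + c + 1) :=
            base c u y (by rw [Wdeg_eq V (by omega : (0:ℕ) < ι)]; exact hu) hy
          have h2 := ih (0 + c + 1) w _ (by rw [Wdeg_eq V ha']; exact hw) h1
          have he : a' + (0 + c + 1) + 1 = a' + 1 + c + 1 := by omega
          rw [he] at h2
          exact h2
      | zero =>
        rw [zero_lie]; exact Submodule.zero_mem _
      | add z w _ _ hz hw =>
        rw [add_lie]; exact Submodule.add_mem _ hz hw
      | smul c' z _ hz =>
        rw [smul_lie]; exact Submodule.smul_mem _ _ hz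
    · rw [Wdeg_bot V ha] at hx
      have : x = 0 := by simpa using hx
      rw [this, zero_lie]
      exact Submodule.zero_mem _

lemma repr_eq_zero_of_degree_ne {ι q : ℕ} (V : Fin ι → Submodule ℝ 𝔤)
    (hindep : iSupIndep V) (b : Module.Basis (Fin q) ℝ 𝔤) (d : Fin q → Fin ι)
    (hgraded : ∀ i, b i ∈ V (d i)) (x : 𝔤) (t : Fin ι) (hx : x ∈ V t)
    (r : Fin q) (hr : d r ≠ t) : b.repr x r = 0 := by
  classical
  set y : 𝔤 := ∑ i ∈ Finset.univ.filter (fun i => d i = t), b.repr x i • b i with hy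
  have hyV : y ∈ V t := by
    apply Submodule.sum_mem
    intro i hi
    have : d i = t := (Finset.mem_filter.mp hi).2
    exact Submodule.smul_mem _ _ (this ▸ hgraded i)
  have hxy : x - y ∈ V t := Submodule.sub_mem _ hx hyV
  have hxy2 : x - y ∈ ⨆ (j) (_ : j ≠ t), V j := by
    have hx' : x = ∑ i, b.repr x i • b i := (b.sum_repr x).symm
    have hd : x - y = ∑ i ∈ Finset.univ.filter (fun i => ¬ d i = t), b.repr x i • b i := by
      rw [hy]
      nth_rewrite 1 [hx']
      rw [← Finset.sum_filter_add_sum_filter_not Finset.univ (fun i => d i = t)]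
      abel
    rw [hd]
    apply Submodule.sum_mem
    intro i hi
    have hne : d i ≠ t := (Finset.mem_filter.mp hi).2
    have hle : V (d i) ≤ ⨆ (j) (_ : j ≠ t), V j := le_iSup₂ (f := fun j _ => V j) (d i) hne
    exact hle (Submodule.smul_mem _ _ (hgraded i))
  have hzero : x - y = 0 := Submodule.disjoint_def.mp (hindep t) _ hxy hxy2
  have hxeq : x = y := sub_eq_zero.mp hzero
  rw [hxeq, hy, map_sum, Finset.sum_apply']
  apply Finset.sum_eq_zero
  intro i hi
  have hir : i ≠ r := fun hir => hr (hir ▸ (Finset.mem_filter.mp hi).2)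
  simp [map_smul, Finsupp.smul_apply, Module.Basis.repr_self, Finsupp.single_apply, hir]

end Lie

/-- In a stratified Lie algebra `𝔤 = V_1 ⊕ … ⊕ V_ι` with graded basis
`X = b` (blocks of sizes recorded by `m`, degrees `d`, paper-degree of `i` being
`d i + 1`), fix `κ ∈ {1,…,ι-1}` and `s` with paper-degree `κ+1`, write
`X_s = Σ_{d_k=1, d_l=κ, k<l} γ_{k,l} ⁅X_k, X_l⁆`, and define the `(m_κ-2)`-form
`θ_s = Σ (-1)^{h(k,l)} γ_{k,l} η_1 ∧ … ∧ η̂_k ∧ … ∧ η̂_l ∧ … ∧ η_{m_κ}` with the signs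
chosen so that `(-1)^{h(k,l)} (∧_{i≠k,l} η_i) ∧ η_l ∧ η_k = η_1 ∧ … ∧ η_{m_κ}`.
Then for every `r` of paper-degree `d_r > κ`:
`θ_s ∧ dη_r ∧ η_{m_κ+1} ∧ … ∧ η_{m_{d_r-1}} = δ_{r,s} · η_1 ∧ … ∧ η_{m_{d_r-1}}`. -/
theorem stmt15 (𝔤 : Type*) [LieRing 𝔤] [LieAlgebra ℝ 𝔤] [Module.Finite ℝ 𝔤]
    (ι q : ℕ) (hι : 2 ≤ ι) (hq : 3 ≤ q)
    (V : Fin ι → Submodule ℝ 𝔤)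
    (hstrat : ∀ j : Fin ι, ∀ h : (j : ℕ) + 1 < ι,
      bracketSpan (V ⟨0, by omega⟩) (V j) = V ⟨(j : ℕ) + 1, h⟩)
    (hlast : bracketSpan (V ⟨0, by omega⟩) (V ⟨ι - 1, by omega⟩) = ⊥)
    (hindep : iSupIndep V) (hspan : (⨆ j, V j) = ⊤)
    -- graded basis with degrees `d` and block bounds `m` (`m t` = number of basis
    -- vectors of paper-degree `≤ t`):
    (b : Module.Basis (Fin q) ℝ 𝔤) (d : Fin q → Fin ι)
    (hgraded : ∀ i, b i ∈ V (d i)) (hmono : Monotone d)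
    (m : ℕ → ℕ) (hm0 : m 0 = 0) (hmq : m ι = q)
    (hblock : ∀ (i : Fin q) (t : Fin ι), d i = t ↔ (m (t : ℕ) ≤ (i : ℕ) ∧ (i : ℕ) < m ((t : ℕ) + 1)))
    -- `κ` and the index `s` of paper-degree `κ + 1`:
    (κ : ℕ) (hκ : 1 ≤ κ) (hκι : κ ≤ ι - 1) (s : Fin q) (hs : (d s : ℕ) = κ)
    -- `X_s = Σ_{d_k = 1, d_l = κ, k < l} γ_{k,l} ⁅X_k, X_l⁆`:
    (γ : Fin q → Fin q → ℝ)
    (hγ : b s = ∑ p ∈ (Finset.univ ×ˢ Finset.univ).filter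
        (fun p : Fin q × Fin q => (d p.1 : ℕ) = 0 ∧ (d p.2 : ℕ) = κ - 1 ∧ p.1 < p.2),
      γ p.1 p.2 • ⁅b p.1, b p.2⁆)
    -- the signs `h(m_κ, k, l)`:
    (h : Fin q → Fin q → ℕ)
    (hsgn : ∀ p ∈ (Finset.univ ×ˢ Finset.univ).filter
        (fun p : Fin q × Fin q => (d p.1 : ℕ) = 0 ∧ (d p.2 : ℕ) = κ - 1 ∧ p.1 < p.2),
      ((-1 : ℝ) ^ (h p.1 p.2)) •
          (etaProd b ((List.finRange q).filter
              (fun i => decide ((i : ℕ) < m κ ∧ i ≠ p.1 ∧ i ≠ p.2))) *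
            ExteriorAlgebra.ι ℝ (b.coord p.2) * ExteriorAlgebra.ι ℝ (b.coord p.1))
        = etaProd b ((List.finRange q).filter (fun i => decide ((i : ℕ) < m κ)))) :
    ∀ r : Fin q, κ ≤ (d r : ℕ) →
      (∑ p ∈ (Finset.univ ×ˢ Finset.univ).filter
          (fun p : Fin q × Fin q => (d p.1 : ℕ) = 0 ∧ (d p.2 : ℕ) = κ - 1 ∧ p.1 < p.2),
        ((-1 : ℝ) ^ (h p.1 p.2) * γ p.1 p.2) •
          etaProd b ((List.finRange q).filter
            (fun i => decide ((i : ℕ) < m κ ∧ i ≠ p.1 ∧ i ≠ p.2))))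
        * dEta b r
        * etaProd b ((List.finRange q).filter
            (fun i => decide (m κ ≤ (i : ℕ) ∧ (i : ℕ) < m (d r : ℕ))))
      = (if r = s then (1 : ℝ) else 0) •
          etaProd b ((List.finRange q).filter (fun i => decide ((i : ℕ) < m (d r : ℕ)))) := by
  intro r hr
  -- coefficients of brackets vanish unless degrees match
  have hreprbr : ∀ (j i : Fin q), (d j : ℕ) + (d i : ℕ) + 1 ≠ (d r : ℕ) →
      b.repr ⁅b j, b i⁆ r = 0 := by
    intro j i hne
    have hmj : b j ∈ Wdeg V (d j : ℕ) := by
      rw [Wdeg_eq V (d j).isLt, Fin.eta]; exact hgraded j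
    have hmi : b i ∈ Wdeg V (d i : ℕ) := by
      rw [Wdeg_eq V (d i).isLt, Fin.eta]; exact hgraded i
    have h1 := graded_bracket hι V hstrat hlast _ _ _ _ hmj hmi
    by_cases hin : (d j : ℕ) + (d i : ℕ) + 1 < ι
    · rw [Wdeg_eq V hin] at h1
      refine repr_eq_zero_of_degree_ne V hindep b d hgraded _ _ h1 r ?_
      intro he
      apply hne
      rw [he]
    · rw [Wdeg_bot V hin] at h1
      have : ⁅b j, b i⁆ = 0 := by simpa using h1
      rw [this]
      simp
  -- downward-closedness of the degree range
  have hVne : ∀ t : Fin ι, (∀ j : Fin q, d j ≠ t) → V t = ⊥ := by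
    intro t ht
    have hle : (⊤ : Submodule ℝ 𝔤) ≤ ⨆ (j) (_ : j ≠ t), V j := by
      rw [← b.span_eq]
      apply Submodule.span_le.mpr
      rintro z ⟨i, rfl⟩
      exact le_iSup₂ (f := fun j _ => V j) (d i) (ht i) (hgraded i)
    exact (hindep t).eq_bot_of_le (le_trans le_top hle)
  have hchain : ∀ (n t : ℕ), Wdeg V t = ⊥ → Wdeg V (t + n) = ⊥ := by
    intro n
    induction n with
    | zero => intro t hbot; exact hbot
    | succ n ihn =>
      intro t hbot
      have h1 := ihn t hbot
      by_cases hin : t + n + 1 < ι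
      · have hin' : t + n < ι := by omega
        rw [Wdeg_eq V hin'] at h1
        have h2 := strat' hι V hstrat hlast (t + n) hin'
        rw [h1] at h2
        have h3 : bracketSpan (V ⟨0, by omega⟩) (⊥ : Submodule ℝ 𝔤) = ⊥ := by
          apply le_bot_iff.mp
          apply Submodule.span_le.mpr
          rintro z ⟨x, hx, y, hy, rfl⟩
          have : y = 0 := by simpa using hy
          simp [this]
        rw [h3] at h2
        exact h2.symm
      · exact Wdeg_bot V hin
  have hdc : ∀ (i : Fin q) (t : ℕ), t ≤ (d i : ℕ) → ∃ j : Fin q, (d j : ℕ) = t := by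
    intro i t hti
    by_contra hno
    push_neg at hno
    have ht : t < ι := by have := (d i).isLt; omega
    have hVt : Wdeg V t = ⊥ := by
      rw [Wdeg_eq V ht]
      exact hVne ⟨t, ht⟩ (fun j hj => hno j (by rw [hj]))
    have hVdi := hchain ((d i : ℕ) - t) t hVt
    rw [show t + ((d i : ℕ) - t) = (d i : ℕ) by omega] at hVdi
    rw [Wdeg_eq V (d i).isLt, Fin.eta] at hVdi
    have hb := hgraded i
    rw [hVdi] at hb
    exact b.ne_zero i (by simpa using hb)
  have hblock' : ∀ j : Fin q, m (d j : ℕ) ≤ (j : ℕ) ∧ (j : ℕ) < m ((d j : ℕ) + 1) :=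
    fun j => (hblock j (d j)).mp rfl
  -- the block characterization
  have hlt : ∀ (i₀ j : Fin q), ((j : ℕ) < m (d i₀ : ℕ) ↔ (d j : ℕ) < (d i₀ : ℕ)) := by
    intro i₀ j
    constructor
    · intro hj
      by_contra hge
      push_neg at hge
      have h1 := (hblock' i₀).1
      have hji : (j : ℕ) < (i₀ : ℕ) := lt_of_lt_of_le hj h1
      have h2 : d j ≤ d i₀ := hmono (le_of_lt (Fin.lt_def.mpr hji))
      have h3 : (d j : ℕ) ≤ (d i₀ : ℕ) := Fin.le_def.mp h2
      have hdeq : d j = d i₀ := Fin.ext (by omega)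
      have h4 := ((hblock j (d i₀)).mp hdeq).1
      omega
    · intro hdj
      have haux : ∀ n : ℕ, ∀ t : ℕ, t = (d j : ℕ) + 1 + n → t ≤ (d i₀ : ℕ) → (j : ℕ) < m t := by
        intro n
        induction n with
        | zero =>
          intro t ht _
          have h2 := (hblock' j).2
          have he : t = (d j : ℕ) + 1 := by omega
          rw [he]
          exact h2
        | succ n ihn =>
          intro t ht hle
          have hjt : (j : ℕ) < m (t - 1) := ihn (t - 1) (by omega) (by omega)
          obtain ⟨w, hw⟩ := hdc i₀ (t - 1) (by omega)
          have hwb := hblock' w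
          rw [hw] at hwb
          rw [show t - 1 + 1 = t by omega] at hwb
          omega
      exact haux ((d i₀ : ℕ) - (d j : ℕ) - 1) (d i₀ : ℕ) (by omega) le_rfl
  have hltκ : ∀ j : Fin q, ((j : ℕ) < m κ ↔ (d j : ℕ) < κ) := by
    intro j; rw [← hs]; exact hlt s j
  have hltr : ∀ j : Fin q, ((j : ℕ) < m (d r : ℕ) ↔ (d j : ℕ) < (d r : ℕ)) := hlt r
  have hmκr : m κ ≤ m (d r : ℕ) := by
    rcases eq_or_lt_of_le hr with heq | hlt'
    · rw [← heq]
    · have h1 : (s : ℕ) < m (d r : ℕ) := (hltr s).mpr (by omega)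
      have h2 : m κ ≤ (s : ℕ) := by have := (hblock' s).1; rw [hs] at this; exact this
      omega
  have hPsplit : etaProd b ((List.finRange q).filter
        (fun i : Fin q => decide ((i : ℕ) < m (d r : ℕ))))
      = etaProd b ((List.finRange q).filter (fun i : Fin q => decide ((i : ℕ) < m κ))) *
        etaProd b ((List.finRange q).filter
          (fun i : Fin q => decide (m κ ≤ (i : ℕ) ∧ (i : ℕ) < m (d r : ℕ)))) := by
    rw [filter_split (m κ) (m (d r : ℕ)) hmκr (List.finRange q) (List.pairwise_le_finRange q),
      etaProd_append]
  -- main computation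
  set S := (Finset.univ ×ˢ Finset.univ).filter
      (fun p : Fin q × Fin q => (d p.1 : ℕ) = 0 ∧ (d p.2 : ℕ) = κ - 1 ∧ p.1 < p.2) with hSdef
  have hinner : ∀ p ∈ S,
      (((-1 : ℝ) ^ (h p.1 p.2) * γ p.1 p.2) •
        etaProd b ((List.finRange q).filter
          (fun i => decide ((i : ℕ) < m κ ∧ i ≠ p.1 ∧ i ≠ p.2))))
        * dEta b r
        * etaProd b ((List.finRange q).filter
            (fun i => decide (m κ ≤ (i : ℕ) ∧ (i : ℕ) < m (d r : ℕ))))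
      = (γ p.1 p.2 * b.repr ⁅b p.1, b p.2⁆ r) •
          etaProd b ((List.finRange q).filter (fun i => decide ((i : ℕ) < m (d r : ℕ)))) := by
    intro p hp
    have hp' := Finset.mem_filter.mp (by rw [hSdef] at hp; exact hp)
    obtain ⟨-, hp1, hp2, hp12⟩ := hp'
    have hkey := hsgn p hp
    have hTmem : p ∈ (Finset.univ ×ˢ Finset.univ).filter
        (fun u : Fin q × Fin q => u.1 < u.2) :=
      Finset.mem_filter.mpr ⟨by simp, hp12⟩
    have hzeros : ∀ u ∈ (Finset.univ ×ˢ Finset.univ).filter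
        (fun u : Fin q × Fin q => u.1 < u.2), u ≠ p →
        (((-1 : ℝ) ^ (h p.1 p.2) * γ p.1 p.2) •
          etaProd b ((List.finRange q).filter
            (fun i => decide ((i : ℕ) < m κ ∧ i ≠ p.1 ∧ i ≠ p.2))))
          * ((b.repr ⁅b u.1, b u.2⁆ r) •
              (ExteriorAlgebra.ι ℝ (b.coord u.2) * ExteriorAlgebra.ι ℝ (b.coord u.1)))
          * etaProd b ((List.finRange q).filter
              (fun i => decide (m κ ≤ (i : ℕ) ∧ (i : ℕ) < m (d r : ℕ)))) = 0 := by
      intro u hu hup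
      have hu12 : u.1 < u.2 := (Finset.mem_filter.mp hu).2
      by_cases hcu : (d u.1 : ℕ) + (d u.2 : ℕ) + 1 = (d r : ℕ)
      · have hv : ∃ v : Fin q, (v = u.2 ∨ v = u.1) ∧ v ≠ p.1 ∧ v ≠ p.2 := by
          by_cases h1 : u.1 = p.1
          · by_cases h2 : u.2 = p.2
            · exact absurd (Prod.ext h1 h2) hup
            · refine ⟨u.2, Or.inl rfl, ?_, h2⟩
              intro he
              rw [← h1] at he
              exact absurd he (ne_of_gt hu12)
          · by_cases h1' : u.1 = p.2
            · refine ⟨u.2, Or.inl rfl, ?_, ?_⟩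
              · intro he
                have hcontr := hp12
                rw [← h1', ← he] at hcontr
                exact absurd (lt_trans hu12 hcontr) (lt_irrefl _)
              · intro he
                rw [← h1'] at he
                exact absurd he (ne_of_gt hu12)
            · exact ⟨u.1, Or.inr rfl, h1, h1'⟩
        obtain ⟨v, hv12, hvp1, hvp2⟩ := hv
        have hvdr : (d v : ℕ) < (d r : ℕ) := by
          rcases hv12 with rfl | rfl <;> omega
        have hvm : (v : ℕ) < m (d r : ℕ) := (hltr v).mpr hvdr
        have hwedge : etaProd b ((List.finRange q).filter
              (fun i => decide ((i : ℕ) < m κ ∧ i ≠ p.1 ∧ i ≠ p.2)))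
            * (ExteriorAlgebra.ι ℝ (b.coord u.2) * ExteriorAlgebra.ι ℝ (b.coord u.1))
            * etaProd b ((List.finRange q).filter
                (fun i => decide (m κ ≤ (i : ℕ) ∧ (i : ℕ) < m (d r : ℕ)))) = 0 := by
          rw [etaProd_mul_pair_mul]
          apply etaProd_pair_dup b _ _ _ _ v hv12
          by_cases hvκ : (v : ℕ) < m κ
          · left
            refine List.mem_filter.mpr ⟨List.mem_finRange v, ?_⟩
            simp only [decide_eq_true_eq]
            exact ⟨hvκ, hvp1, hvp2⟩
          · right
            refine List.mem_filter.mpr ⟨List.mem_finRange v, ?_⟩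
            simp only [decide_eq_true_eq]
            exact ⟨le_of_not_gt hvκ, hvm⟩
        simp only [smul_mul_assoc, mul_smul_comm, smul_smul]
        rw [hwedge, smul_zero]
      · rw [hreprbr u.1 u.2 hcu, zero_smul, mul_zero, zero_mul]
    unfold dEta
    rw [Finset.mul_sum, Finset.sum_mul]
    rw [Finset.sum_eq_single_of_mem p hTmem hzeros]
    have hshuffle :
        (((-1 : ℝ) ^ (h p.1 p.2) * γ p.1 p.2) •
          etaProd b ((List.finRange q).filter
            (fun i => decide ((i : ℕ) < m κ ∧ i ≠ p.1 ∧ i ≠ p.2))))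
          * ((b.repr ⁅b p.1, b p.2⁆ r) •
              (ExteriorAlgebra.ι ℝ (b.coord p.2) * ExteriorAlgebra.ι ℝ (b.coord p.1)))
          * etaProd b ((List.finRange q).filter
              (fun i => decide (m κ ≤ (i : ℕ) ∧ (i : ℕ) < m (d r : ℕ))))
        = (γ p.1 p.2 * b.repr ⁅b p.1, b p.2⁆ r) •
            ((((-1 : ℝ) ^ (h p.1 p.2)) •
              (etaProd b ((List.finRange q).filter
                (fun i => decide ((i : ℕ) < m κ ∧ i ≠ p.1 ∧ i ≠ p.2)))
                * ExteriorAlgebra.ι ℝ (b.coord p.2) * ExteriorAlgebra.ι ℝ (b.coord p.1)))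
              * etaProd b ((List.finRange q).filter
                  (fun i => decide (m κ ≤ (i : ℕ) ∧ (i : ℕ) < m (d r : ℕ))))) := by
      simp only [smul_mul_assoc, mul_smul_comm, smul_smul, mul_assoc]
      ring_nf
    rw [hshuffle, hkey, ← hPsplit]
  rw [Finset.sum_mul, Finset.sum_mul, Finset.sum_congr rfl hinner, ← Finset.sum_smul]
  congr 1
  have h1 : (b.repr (b s)) r = ∑ p ∈ S, γ p.1 p.2 * b.repr ⁅b p.1, b p.2⁆ r := by
    conv_lhs => rw [hγ]
    rw [map_sum, Finset.sum_apply']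
    apply Finset.sum_congr rfl
    intro p _
    simp [map_smul]
  rw [← h1, Module.Basis.repr_self, Finsupp.single_apply]
  rcases eq_or_ne r s with rfl | hne
  · simp
  · simp [hne, Ne.symm hne]
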